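/- arXiv:2602.22574 — 3 statements merged into one kernel-verified Lean document; each statement's English description precedes it below -/
import Mathlib

section
/- For |q|<1 and parameters a, c, x in the region of convergence, the basic hypergeometric series satisfies the three-term recurrence ₁φ₁(aq; cq; q, x) = (c − a x) · ₁φ₁(aq; cq; q, xq) + (1 − c) · ₁φ₁(a; c; q, x). -/
open scoped BigOperators

/-- q-shifted factorial (a;q)_j -/
noncomputable def qPoch (a q : ℂ) (j : ℕ) : ℂ :=
  ∏ i ∈ Finset.range j, (1 - a * q ^ i)

/-- infinite q-shifted factorial (a;q)_∞ -/
noncomputable def qPochInf (a q : ℂ) : ℂ :=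
  ∏' j : ℕ, (1 - a * q ^ j)

/-- basic hypergeometric series ₁φ₁(a; c; q, x) -/
noncomputable def phi11 (a c q x : ℂ) : ℂ :=
  ∑' j : ℕ, qPoch a q j / (qPoch q q j * qPoch c q j) *
    (-1) ^ j * q ^ (j * (j - 1) / 2) * x ^ j

/-- basic hypergeometric series ₀φ₁(–; c; q, x) -/
noncomputable def phi01 (c q x : ℂ) : ℂ :=
  ∑' j : ℕ, q ^ (j * (j - 1)) * x ^ j / (qPoch q q j * qPoch c q j)

/-- basic hypergeometric series ₂φ₁(a, b; c; q, x) -/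
noncomputable def phi21 (a b c q x : ℂ) : ℂ :=
  ∑' j : ℕ, qPoch a q j * qPoch b q j / (qPoch q q j * qPoch c q j) * x ^ j

lemma qPoch_succ (a q : ℂ) (j : ℕ) : qPoch a q (j + 1) = qPoch a q j * (1 - a * q ^ j) :=
  Finset.prod_range_succ _ _

lemma qPoch_succ' (a q : ℂ) (j : ℕ) : qPoch a q (j + 1) = (1 - a) * qPoch (a * q) q j := by
  rw [qPoch, Finset.prod_range_succ', qPoch]
  rw [mul_comm]
  congr 1
  · simp
  · apply Finset.prod_congr rfl
    intro i _
    ring_nf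

lemma qPoch_ne_zero {b q : ℂ} (h : ∀ i : ℕ, b * q ^ i ≠ 1) (j : ℕ) : qPoch b q j ≠ 0 := by
  rw [qPoch]
  apply Finset.prod_ne_zero_iff.2
  intro i _ h0
  exact h i (by linear_combination -h0)

lemma q_factor_ne_one {q : ℂ} (hq : ‖q‖ < 1) : ∀ i : ℕ, q * q ^ i ≠ 1 := by
  intro i h
  have h1 : ‖q ^ (i + 1)‖ < 1 := by
    rw [norm_pow]
    exact pow_lt_one₀ (norm_nonneg q) hq (Nat.succ_ne_zero i)
  rw [pow_succ, mul_comm, h] at h1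
  simp at h1

lemma tri_succ (j : ℕ) : (j + 1) * ((j + 1) - 1) / 2 = j * (j - 1) / 2 + j := by
  rw [← Finset.sum_range_id, ← Finset.sum_range_id, Finset.sum_range_succ]

/-- the general term of ₁φ₁ -/
noncomputable def phiTerm (a c q x : ℂ) (j : ℕ) : ℂ :=
  qPoch a q j / (qPoch q q j * qPoch c q j) * (-1) ^ j * q ^ (j * (j - 1) / 2) * x ^ j

lemma phi11_eq (a c q x : ℂ) : phi11 a c q x = ∑' j, phiTerm a c q x j := rfl

lemma phiTerm_succ {a c q x : ℂ} (hq : ‖q‖ < 1) (hc : ∀ n : ℕ, c * q ^ n ≠ 1) (j : ℕ) :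
    phiTerm a c q x (j + 1) =
      phiTerm a c q x j *
        ((1 - a * q ^ j) / ((1 - q * q ^ j) * (1 - c * q ^ j)) * (-(q ^ j * x))) := by
  have hq1 : (1 : ℂ) - q * q ^ j ≠ 0 := sub_ne_zero.2 fun h => q_factor_ne_one hq j h.symm
  have hc1 : (1 : ℂ) - c * q ^ j ≠ 0 := sub_ne_zero.2 fun h => hc j h.symm
  have hQ : qPoch q q j ≠ 0 := qPoch_ne_zero (q_factor_ne_one hq) j
  have hC : qPoch c q j ≠ 0 := qPoch_ne_zero hc j
  rw [phiTerm, phiTerm, qPoch_succ, qPoch_succ, qPoch_succ, tri_succ, pow_add, pow_succ,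
    pow_succ]
  field_simp
  ring

lemma phiTerm_summable {a c q x : ℂ} (hq : ‖q‖ < 1) (hc : ∀ n : ℕ, c * q ^ n ≠ 1) :
    Summable (phiTerm a c q x) := by
  apply summable_of_ratio_norm_eventually_le (r := 1/2) (by norm_num)
  have hpow : Filter.Tendsto (fun j : ℕ => q ^ j) Filter.atTop (nhds 0) :=
    tendsto_pow_atTop_nhds_zero_of_norm_lt_one hq
  have htend : Filter.Tendsto
      (fun j : ℕ => (1 - a * q ^ j) / ((1 - q * q ^ j) * (1 - c * q ^ j)) * (-(q ^ j * x)))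
      Filter.atTop (nhds 0) := by
    have h1 : Filter.Tendsto (fun j : ℕ => (1 : ℂ) - a * q ^ j) Filter.atTop (nhds 1) := by
      have := (hpow.const_mul a).const_sub (1 : ℂ)
      simpa using this
    have h2 : Filter.Tendsto (fun j : ℕ => ((1 : ℂ) - q * q ^ j) * (1 - c * q ^ j))
        Filter.atTop (nhds 1) := by
      have hA := (hpow.const_mul q).const_sub (1 : ℂ)
      have hB := (hpow.const_mul c).const_sub (1 : ℂ)
      have := hA.mul hB
      simpa using this
    have h3 : Filter.Tendsto (fun j : ℕ => -(q ^ j * x)) Filter.atTop (nhds 0) := by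
      have := (hpow.mul_const x).neg
      simpa using this
    have := (h1.div h2 one_ne_zero).mul h3
    simpa using this
  have hev : ∀ᶠ j in Filter.atTop,
      ‖(1 - a * q ^ j) / ((1 - q * q ^ j) * (1 - c * q ^ j)) * (-(q ^ j * x))‖ ≤ 1/2 := by
    have := htend.norm
    simp only [norm_zero] at this
    exact this.eventually_le_const (by norm_num)
  filter_upwards [hev] with j hj
  rw [phiTerm_succ hq hc j, norm_mul, mul_comm]
  exact mul_le_mul_of_nonneg_right hj (norm_nonneg _)

theorem phi11_three_term_recurrence (q a c x : ℂ) (hq : ‖q‖ < 1)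
    (hc : ∀ n : ℕ, c * q ^ n ≠ 1) :
    phi11 (a * q) (c * q) q x
      = (c - a * x) * phi11 (a * q) (c * q) q (x * q)
        + (1 - c) * phi11 a c q x := by
  have hcq : ∀ n : ℕ, c * q * q ^ n ≠ 1 := by
    intro n h
    exact hc (n + 1) (by rw [pow_succ]; linear_combination h)
  set T1 := phiTerm (a * q) (c * q) q x with hT1
  set T2 := phiTerm (a * q) (c * q) q (x * q) with hT2
  set T3 := phiTerm a c q x with hT3
  have S1 : Summable T1 := phiTerm_summable hq hcq
  have S2 : Summable T2 := phiTerm_summable hq hcq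
  have S3 : Summable T3 := phiTerm_summable hq hc
  -- key termwise recurrence
  have key : ∀ k : ℕ, T1 (k + 1) - c * T2 (k + 1) - (1 - c) * T3 (k + 1)
      = -(a * x) * T2 k := by
    intro k
    have hq1 : (1 : ℂ) - q * q ^ k ≠ 0 := sub_ne_zero.2 fun h => q_factor_ne_one hq k h.symm
    have hc1 : (1 : ℂ) - c * q * q ^ k ≠ 0 := sub_ne_zero.2 fun h => hcq k h.symm
    have hc0 : (1 : ℂ) - c ≠ 0 := sub_ne_zero.2 fun h => hc 0 (by simpa using h.symm)
    have hQ : qPoch q q k ≠ 0 := qPoch_ne_zero (q_factor_ne_one hq) k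
    have hC : qPoch (c * q) q k ≠ 0 := qPoch_ne_zero hcq k
    rw [hT1, hT2, hT3, phiTerm, phiTerm, phiTerm, phiTerm,
      qPoch_succ (a*q), qPoch_succ q, qPoch_succ (c*q),
      qPoch_succ' a, qPoch_succ' c, tri_succ]
    simp only [pow_add, pow_succ, mul_pow, pow_one]
    generalize qPoch (a*q) q k = PA
    generalize hPQ : qPoch q q k = PQ at hQ ⊢
    generalize hPC : qPoch (c*q) q k = PC at hC ⊢
    generalize (-1:ℂ)^k = S
    generalize q ^ (k*(k-1)/2) = E
    generalize hZ : (q:ℂ) ^ k = Z at hq1 hc1 ⊢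
    generalize x ^ k = X
    field_simp [hQ, hC, hq1, hc1, hc0]
    have hc1' : (1:ℂ) - q * Z * c ≠ 0 := by rwa [show (1:ℂ) - q * Z * c = 1 - c * q * Z by ring]
    linear_combination (-(PA * Z * S * E * X * x) * (1 - Z * a * q)) * mul_inv_cancel₀ hc1'
  have key0 : T1 0 - c * T2 0 - (1 - c) * T3 0 = 0 := by
    simp [hT1, hT2, hT3, phiTerm, qPoch]
  -- sum the recurrence
  have Sf : Summable (fun j => T1 j - c * T2 j - (1 - c) * T3 j) :=
    (S1.sub (S2.mul_left c)).sub (S3.mul_left (1 - c))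
  have hsum : ∑' j, (T1 j - c * T2 j - (1 - c) * T3 j) = -(a * x) * ∑' j, T2 j := by
    rw [Sf.tsum_eq_zero_add, key0]
    simp only [key]
    rw [tsum_mul_left, zero_add]
  rw [Summable.tsum_sub (S1.sub (S2.mul_left c)) (S3.mul_left (1 - c)),
    Summable.tsum_sub S1 (S2.mul_left c), tsum_mul_left, tsum_mul_left] at hsum
  rw [phi11_eq, phi11_eq, phi11_eq]
  show ∑' j, T1 j = (c - a * x) * ∑' j, T2 j + (1 - c) * ∑' j, T3 j
  linear_combination hsum
end

section
/- For |q|<1, the ₀φ₁ series with lower parameter −q satisfies ₀φ₁(−; −q; q, x) = (−x; q²)_∞, i.e., Σ_{j≥0} q^{j(j−1)} x^j / ((q;q)_j (−q;q)_j) = ∏_{j≥0}(1 + x q^{2j}). -/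
open scoped BigOperators

namespace Phi01Aux

open Filter Finset Topology

lemma factor_ne_zero {t : ℂ} (ht : ‖t‖ < 1) (i : ℕ) : 1 - t * t ^ i ≠ 0 := by
  intro h
  have h1 : (1 : ℂ) = t * t ^ i := sub_eq_zero.mp h
  have h2 : ‖t * t ^ i‖ ≤ ‖t‖ := by
    rw [norm_mul, norm_pow]
    calc ‖t‖ * ‖t‖ ^ i ≤ ‖t‖ * 1 := by
          exact mul_le_mul_of_nonneg_left (pow_le_one₀ (norm_nonneg t) ht.le) (norm_nonneg t)
      _ = ‖t‖ := mul_one _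
  rw [← h1] at h2
  simp only [norm_one] at h2
  linarith

lemma qPoch_ne_zero {t : ℂ} (ht : ‖t‖ < 1) (j : ℕ) : qPoch t t j ≠ 0 :=
  Finset.prod_ne_zero_iff.2 fun i _ => factor_ne_zero ht i

lemma norm_qPoch_ge {t : ℂ} (ht : ‖t‖ < 1) (j : ℕ) : (1 - ‖t‖) ^ j ≤ ‖qPoch t t j‖ := by
  rw [qPoch, norm_prod]
  rw [show (1 - ‖t‖) ^ j = ∏ i ∈ Finset.range j, (1 - ‖t‖) by
    rw [Finset.prod_const, Finset.card_range]]
  refine Finset.prod_le_prod (fun i _ => by linarith) (fun i _ => ?_)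
  have h1 : ‖t * t ^ i‖ ≤ ‖t‖ := by
    rw [norm_mul, norm_pow]
    calc ‖t‖ * ‖t‖ ^ i ≤ ‖t‖ * 1 :=
          mul_le_mul_of_nonneg_left (pow_le_one₀ (norm_nonneg t) ht.le) (norm_nonneg t)
      _ = ‖t‖ := mul_one _
  calc 1 - ‖t‖ ≤ 1 - ‖t * t ^ i‖ := by linarith
    _ = ‖(1 : ℂ)‖ - ‖t * t ^ i‖ := by rw [norm_one]
    _ ≤ ‖1 - t * t ^ i‖ := norm_sub_norm_le _ _

/-- rescaled q-binomial coefficient -/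
noncomputable def c (t : ℂ) (n j : ℕ) : ℂ :=
  if j ≤ n then t ^ (∑ i ∈ Finset.range j, i) * qPoch t t n / (qPoch t t j * qPoch t t (n - j))
  else 0

lemma c_zero {t : ℂ} (ht : ‖t‖ < 1) (n : ℕ) : c t n 0 = 1 := by
  have h0 : qPoch t t 0 = 1 := by simp [qPoch]
  simp only [c, if_pos (Nat.zero_le n), Finset.range_zero, Finset.sum_empty, pow_zero,
    Nat.sub_zero, h0, one_mul]
  exact div_self (qPoch_ne_zero ht n)

lemma c_big {t : ℂ} {n j : ℕ} (h : n < j) : c t n j = 0 := if_neg (by omega)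

lemma qPoch_succ (t : ℂ) (j : ℕ) : qPoch t t (j + 1) = qPoch t t j * (1 - t * t ^ j) :=
  Finset.prod_range_succ _ _

lemma c_succ_succ {t : ℂ} (ht : ‖t‖ < 1) (n m : ℕ) :
    c t (n + 1) (m + 1) = c t n (m + 1) + t ^ n * c t n m := by
  by_cases h1 : m + 1 ≤ n
  · obtain ⟨k, rfl⟩ : ∃ k, n = m + 1 + k := ⟨n - (m + 1), by omega⟩
    have e1 : m + 1 + k + 1 - (m + 1) = k + 1 := by omega
    have e2 : m + 1 + k - (m + 1) = k := by omega
    have e3 : m + 1 + k - m = k + 1 := by omega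
    simp only [c, if_pos (by omega : m + 1 ≤ m + 1 + k + 1), if_pos (by omega : m + 1 ≤ m + 1 + k),
      if_pos (by omega : m ≤ m + 1 + k), e1, e2, e3]
    rw [show m + 1 + k + 1 = (m + 1 + k) + 1 from rfl, qPoch_succ t (m + 1 + k),
      qPoch_succ t k, qPoch_succ t m, Finset.sum_range_succ, pow_add]
    have hPm := qPoch_ne_zero ht m
    have hPk := qPoch_ne_zero ht k
    have hPn := qPoch_ne_zero ht (m + 1 + k)
    have hfm := factor_ne_zero ht m
    have hfk := factor_ne_zero ht k
    field_simp
    linear_combination (t * t ^ (∑ x ∈ range m, x) * t ^ m * t ^ k) * (mul_inv_cancel₀ hfm)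
  · by_cases h2 : m = n
    · subst h2
      have e0 : m + 1 - (m + 1) = 0 := by omega
      have e1 : m - m = 0 := by omega
      rw [c_big (by omega : m < m + 1)]
      simp only [c, if_pos (le_refl (m + 1)), if_pos (le_refl m), e0, e1,
        Finset.sum_range_succ, pow_add]
      have h0 : qPoch t t 0 = 1 := by simp [qPoch]
      rw [h0]
      have hPm := qPoch_ne_zero ht m
      have hPm1 := qPoch_ne_zero ht (m + 1)
      field_simp
      ring
    · have hm : n < m := by omega
      rw [c_big (by omega : n + 1 < m + 1), c_big (by omega : n < m + 1), c_big hm]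
      simp

lemma prod_eq_sum {t : ℂ} (ht : ‖t‖ < 1) (x : ℂ) (n : ℕ) :
    ∏ i ∈ Finset.range n, (1 + x * t ^ i) = ∑ j ∈ Finset.range (n + 1), c t n j * x ^ j := by
  induction n with
  | zero => simp [c_zero ht]
  | succ n ih =>
    rw [Finset.prod_range_succ, ih]
    rw [Finset.sum_range_succ' (fun j => c t (n + 1) j * x ^ j) (n + 1)]
    have hrec : ∀ m ∈ Finset.range (n + 1),
        c t (n + 1) (m + 1) * x ^ (m + 1)
          = c t n (m + 1) * x ^ (m + 1) + (t ^ n * x) * (c t n m * x ^ m) := by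
      intro m _
      rw [c_succ_succ ht]
      ring
    rw [Finset.sum_congr rfl hrec, Finset.sum_add_distrib, ← Finset.mul_sum, c_zero ht]
    have h1 : ∑ m ∈ Finset.range (n + 1), c t n (m + 1) * x ^ (m + 1)
        = ∑ m ∈ Finset.range n, c t n (m + 1) * x ^ (m + 1) := by
      rw [Finset.sum_range_succ, c_big (by omega : n < n + 1)]
      simp
    rw [h1]
    have h2 : ∑ j ∈ Finset.range (n + 1), c t n j * x ^ j
        = ∑ m ∈ Finset.range n, c t n (m + 1) * x ^ (m + 1) + c t n 0 * x ^ 0 :=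
      Finset.sum_range_succ' _ _
    rw [c_zero ht] at h2
    rw [h2]
    ring

lemma c_eq {t : ℂ} (ht : ‖t‖ < 1) {n j : ℕ} (h : j ≤ n) :
    c t n j = t ^ (∑ i ∈ Finset.range j, i) *
      (∏ k ∈ Finset.range j, (1 - t * t ^ (n - j + k))) / qPoch t t j := by
  obtain ⟨d, rfl⟩ : ∃ d, n = d + j := ⟨n - j, by omega⟩
  have e1 : d + j - j = d := by omega
  simp only [c, if_pos h, e1]
  have hsplit : qPoch t t (d + j)
      = qPoch t t d * ∏ k ∈ Finset.range j, (1 - t * t ^ (d + k)) := by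
    rw [qPoch, Finset.prod_range_add]; rfl
  rw [hsplit]
  have hPd := qPoch_ne_zero ht d
  have hPj := qPoch_ne_zero ht j
  field_simp

end Phi01Aux

open Filter Finset Topology Phi01Aux in
lemma phi01_key (t x : ℂ) (ht : ‖t‖ < 1) :
    ∑' j : ℕ, t ^ (∑ i ∈ Finset.range j, i) * x ^ j / qPoch t t j
      = ∏' i : ℕ, (1 + x * t ^ i) := by
  -- Multipliable
  have hmult : Multipliable (fun i : ℕ => 1 + x * t ^ i) := by
    by_cases hzero : ∃ i : ℕ, 1 + x * t ^ i = 0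
    · obtain ⟨i0, hi0⟩ := hzero
      refine ⟨0, ?_⟩
      have heq : (fun s : Finset ℕ => (0 : ℂ)) =ᶠ[atTop]
          (fun s : Finset ℕ => ∏ i ∈ s, (1 + x * t ^ i)) := by
        filter_upwards [Filter.eventually_ge_atTop ({i0} : Finset ℕ)] with s hs
        exact (Finset.prod_eq_zero (hs (Finset.mem_singleton_self i0)) hi0).symm
      exact Filter.Tendsto.congr' heq tendsto_const_nhds
    · push_neg at hzero
      refine Complex.multipliable_of_summable_log ?_
      refine Summable.of_norm_bounded_eventually (g := fun n => 3 / 2 * (‖x‖ * ‖t‖ ^ n))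
        ((Summable.mul_left _ ((summable_geometric_of_lt_one (norm_nonneg t) ht).mul_left ‖x‖)))
        ?_
      rw [Nat.cofinite_eq_atTop]
      have hto : Tendsto (fun n : ℕ => ‖x‖ * ‖t‖ ^ n) atTop (𝓝 0) := by
        simpa using (tendsto_pow_atTop_nhds_zero_of_norm_lt_one
          (by rwa [Real.norm_of_nonneg (norm_nonneg t)] : ‖‖t‖‖ < 1)).const_mul ‖x‖
      filter_upwards [hto.eventually_le_const (by norm_num : (0:ℝ) < 1/2)] with n hn
      have h12 : ‖x * t ^ n‖ ≤ 1 / 2 := by rwa [norm_mul, norm_pow]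
      calc ‖Complex.log (1 + x * t ^ n)‖ ≤ 3 / 2 * ‖x * t ^ n‖ :=
            Complex.norm_log_one_add_half_le_self h12
        _ = 3 / 2 * (‖x‖ * ‖t‖ ^ n) := by rw [norm_mul, norm_pow]
  have hprodlim : Tendsto (fun n => ∏ i ∈ Finset.range n, (1 + x * t ^ i)) atTop
      (𝓝 (∏' i : ℕ, (1 + x * t ^ i))) := hmult.hasProd.tendsto_prod_nat
  -- Tannery
  set B : ℕ → ℝ := fun j => ‖t‖ ^ (∑ i ∈ Finset.range j, i) * (2 / (1 - ‖t‖) * ‖x‖) ^ j with hB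
  have hBnonneg : ∀ j, 0 ≤ B j := by
    intro j
    apply mul_nonneg (pow_nonneg (norm_nonneg t) _)
    apply pow_nonneg
    exact mul_nonneg (div_nonneg (by norm_num) (by linarith)) (norm_nonneg x)
  have hBsum : Summable B := by
    refine summable_of_ratio_norm_eventually_le (r := 1/2) (by norm_num) ?_
    have hto : Tendsto (fun j : ℕ => ‖t‖ ^ j * (2 / (1 - ‖t‖) * ‖x‖)) atTop (𝓝 0) := by
      simpa using (tendsto_pow_atTop_nhds_zero_of_norm_lt_one
        (by rwa [Real.norm_of_nonneg (norm_nonneg t)] : ‖‖t‖‖ < 1)).mul_const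
        (2 / (1 - ‖t‖) * ‖x‖)
    filter_upwards [hto.eventually_le_const (by norm_num : (0:ℝ) < 1/2)] with j hj
    have hstep : B (j + 1) = B j * (‖t‖ ^ j * (2 / (1 - ‖t‖) * ‖x‖)) := by
      simp only [hB, Finset.sum_range_succ, pow_add, pow_succ]
      ring
    rw [Real.norm_of_nonneg (hBnonneg _), Real.norm_of_nonneg (hBnonneg _), hstep]
    calc B j * (‖t‖ ^ j * (2 / (1 - ‖t‖) * ‖x‖)) ≤ B j * (1/2) :=
          mul_le_mul_of_nonneg_left hj (hBnonneg j)
      _ = 1/2 * B j := by ring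
  have hlim : ∀ j : ℕ, Tendsto (fun n => c t n j * x ^ j) atTop
      (𝓝 (t ^ (∑ i ∈ Finset.range j, i) * x ^ j / qPoch t t j)) := by
    intro j
    have h1 : ∀ k : ℕ, Tendsto (fun n : ℕ => 1 - t * t ^ (n - j + k)) atTop (𝓝 1) := by
      intro k
      have hnat : Tendsto (fun n : ℕ => n - j + k) atTop atTop :=
        Filter.tendsto_atTop_atTop.2 fun b => ⟨b + j, fun n hn => by omega⟩
      have hpow : Tendsto (fun n : ℕ => t ^ (n - j + k)) atTop (𝓝 0) :=
        (tendsto_pow_atTop_nhds_zero_of_norm_lt_one ht).comp hnat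
      simpa using tendsto_const_nhds.sub (hpow.const_mul t)
    have h2 : Tendsto (fun n : ℕ => ∏ k ∈ Finset.range j, (1 - t * t ^ (n - j + k))) atTop
        (𝓝 1) := by
      have := tendsto_finset_prod (f := fun k (n : ℕ) => 1 - t * t ^ (n - j + k))
        (a := fun _ => (1 : ℂ)) (Finset.range j) (fun k _ => h1 k)
      simpa using this
    have h3 : Tendsto (fun n : ℕ => t ^ (∑ i ∈ Finset.range j, i) *
        (∏ k ∈ Finset.range j, (1 - t * t ^ (n - j + k))) / qPoch t t j * x ^ j) atTop
        (𝓝 (t ^ (∑ i ∈ Finset.range j, i) * 1 / qPoch t t j * x ^ j)) :=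
      (((tendsto_const_nhds.mul h2).div_const _).mul_const _)
    have hval : t ^ (∑ i ∈ Finset.range j, i) * x ^ j / qPoch t t j
        = t ^ (∑ i ∈ Finset.range j, i) * 1 / qPoch t t j * x ^ j := by ring
    rw [hval]
    refine h3.congr' ?_
    filter_upwards [Filter.eventually_ge_atTop j] with n hn
    rw [c_eq ht hn]
  have hbound : ∀ n j : ℕ, ‖c t n j * x ^ j‖ ≤ B j := by
    intro n j
    by_cases h : j ≤ n
    · rw [c_eq ht h]
      have hprodle : ‖∏ k ∈ Finset.range j, (1 - t * t ^ (n - j + k))‖ ≤ 2 ^ j := by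
        rw [norm_prod]
        rw [show (2:ℝ) ^ j = ∏ i ∈ Finset.range j, (2:ℝ) by
          rw [Finset.prod_const, Finset.card_range]]
        refine Finset.prod_le_prod (fun i _ => norm_nonneg _) (fun i _ => ?_)
        calc ‖1 - t * t ^ (n - j + i)‖ ≤ ‖(1:ℂ)‖ + ‖t * t ^ (n - j + i)‖ := norm_sub_le _ _
          _ ≤ 1 + 1 := by
              simp only [norm_one, norm_mul, norm_pow]
              have : ‖t‖ * ‖t‖ ^ (n - j + i) ≤ 1 :=
                mul_le_one₀ ht.le (pow_nonneg (norm_nonneg t) _)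
                  (pow_le_one₀ (norm_nonneg t) ht.le)
              linarith
          _ = 2 := by norm_num
      have hPj : (1 - ‖t‖) ^ j ≤ ‖qPoch t t j‖ := norm_qPoch_ge ht j
      have hPjpos : (0:ℝ) < (1 - ‖t‖) ^ j := pow_pos (by linarith) j
      rw [norm_mul, norm_div, norm_mul, norm_pow, norm_pow]
      have hfrac : ‖t‖ ^ (∑ i ∈ Finset.range j, i) *
          ‖∏ k ∈ Finset.range j, (1 - t * t ^ (n - j + k))‖ / ‖qPoch t t j‖
            ≤ ‖t‖ ^ (∑ i ∈ Finset.range j, i) * 2 ^ j / (1 - ‖t‖) ^ j := by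
        apply div_le_div₀ (by positivity)
          (mul_le_mul_of_nonneg_left hprodle (pow_nonneg (norm_nonneg t) _)) hPjpos hPj
      calc ‖t‖ ^ (∑ i ∈ Finset.range j, i) *
            ‖∏ k ∈ Finset.range j, (1 - t * t ^ (n - j + k))‖ / ‖qPoch t t j‖ * ‖x‖ ^ j
          ≤ ‖t‖ ^ (∑ i ∈ Finset.range j, i) * 2 ^ j / (1 - ‖t‖) ^ j * ‖x‖ ^ j :=
            mul_le_mul_of_nonneg_right hfrac (pow_nonneg (norm_nonneg x) _)
        _ = B j := by
            simp only [hB, mul_pow, div_pow]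
            field_simp
    · rw [c_big (by omega), zero_mul, norm_zero]
      exact hBnonneg j
  have htsum : Tendsto (fun n => ∑' j : ℕ, c t n j * x ^ j) atTop
      (𝓝 (∑' j : ℕ, t ^ (∑ i ∈ Finset.range j, i) * x ^ j / qPoch t t j)) :=
    tendsto_tsum_of_dominated_convergence hBsum hlim (Filter.Eventually.of_forall hbound)
  have heq : ∀ n : ℕ, ∑' j : ℕ, c t n j * x ^ j
      = ∏ i ∈ Finset.range n, (1 + x * t ^ i) := by
    intro n
    rw [tsum_eq_sum (s := Finset.range (n + 1))
      (fun b hb => by rw [c_big (by simpa using hb), zero_mul])]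
    exact (prod_eq_sum ht x n).symm
  rw [show (fun n => ∑' j : ℕ, c t n j * x ^ j)
      = (fun n => ∏ i ∈ Finset.range n, (1 + x * t ^ i)) from funext heq] at htsum
  exact tendsto_nhds_unique htsum hprodlim

theorem phi01_eval_at_neg_q (q x : ℂ) (hq : ‖q‖ < 1) :
    phi01 (-q) q x = qPochInf (-x) (q ^ 2) := by
  have ht : ‖q ^ 2‖ < 1 := by
    rw [norm_pow]
    calc ‖q‖ ^ 2 ≤ ‖q‖ * 1 := by nlinarith [norm_nonneg q]
      _ < 1 := by simpa using hq
  have hkey := phi01_key (q ^ 2) x ht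
  rw [phi01, qPochInf]
  have hterm : ∀ j : ℕ, q ^ (j * (j - 1)) * x ^ j / (qPoch q q j * qPoch (-q) q j)
      = (q ^ 2) ^ (∑ i ∈ Finset.range j, i) * x ^ j / qPoch (q ^ 2) (q ^ 2) j := by
    intro j
    have hpow : (q ^ 2) ^ (∑ i ∈ Finset.range j, i) = q ^ (j * (j - 1)) := by
      rw [← pow_mul, ← Finset.sum_range_id_mul_two j, mul_comm 2 _]
    have hden : qPoch q q j * qPoch (-q) q j = qPoch (q ^ 2) (q ^ 2) j := by
      simp only [qPoch, ← Finset.prod_mul_distrib]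
      refine Finset.prod_congr rfl fun i _ => ?_
      have : ((q:ℂ) ^ 2) ^ i = (q ^ i) ^ 2 := pow_right_comm q 2 i
      rw [this]
      ring
    rw [hpow, hden]
  rw [tsum_congr hterm, hkey]
  refine tprod_congr fun i => ?_
  ring
end

section
/- For |q|<1 and parameters in the region of validity, ₂φ₁ satisfies the contiguous relation ₂φ₁(aq, b; cq; q, x) = [(1−b)(c−abx)/(c−b)] · ₂φ₁(aq, bq; cq; q, x) − [b(1−c)/(c−b)] · ₂φ₁(a, b; c; q, x). -/
open scoped BigOperators

lemma qPoch_add (a q : ℂ) (N m : ℕ) :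
    qPoch a q (N + m) = qPoch a q N * qPoch (a * q ^ N) q m := by
  rw [qPoch, Finset.prod_range_add]
  congr 1
  exact Finset.prod_congr rfl fun i _ => by rw [pow_add]; ring

lemma one_sub_ne_of_norm_lt {z : ℂ} (h : ‖z‖ < 1) : (1 : ℂ) - z ≠ 0 := by
  intro hz
  rw [sub_eq_zero] at hz
  rw [← hz, norm_one] at h
  exact lt_irrefl _ h

-- norm lower bound via 1 - ‖z‖ ≤ ‖1 - z‖
example (z : ℂ) : 1 - ‖z‖ ≤ ‖1 - z‖ := by
  have := norm_sub_norm_le (1 : ℂ) z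
  simpa using this

-- geometric sum bound
lemma geom_sum_le_inv {r : ℝ} (h0 : 0 ≤ r) (h1 : r < 1) (j : ℕ) :
    ∑ i ∈ Finset.range j, r ^ i ≤ (1 - r)⁻¹ := by
  rw [← tsum_geometric_of_lt_one h0 h1]
  exact Summable.sum_le_tsum _ (fun i _ => pow_nonneg h0 i) (summable_geometric_of_lt_one h0 h1)

-- product lower bound: ∏ (1 - t i) ≥ 1 - ∑ t i
lemma one_sub_sum_le_prod (t : ℕ → ℝ) (ht0 : ∀ i, 0 ≤ t i) (ht1 : ∀ i, t i ≤ 1) (j : ℕ) :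
    1 - ∑ i ∈ Finset.range j, t i ≤ ∏ i ∈ Finset.range j, (1 - t i) := by
  induction j with
  | zero => simp
  | succ n ih =>
    rw [Finset.sum_range_succ, Finset.prod_range_succ]
    have hp : (0:ℝ) ≤ ∏ i ∈ Finset.range n, (1 - t i) :=
      Finset.prod_nonneg fun i _ => by linarith [ht1 i]
    have hS : (0:ℝ) ≤ ∑ i ∈ Finset.range n, t i :=
      Finset.sum_nonneg fun i _ => ht0 i
    have key : (1 - (∑ i ∈ Finset.range n, t i)) * (1 - t n)
        ≤ (∏ i ∈ Finset.range n, (1 - t i)) * (1 - t n) :=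
      mul_le_mul_of_nonneg_right ih (by linarith [ht1 n])
    nlinarith [mul_nonneg hS (ht0 n)]

lemma qPoch_norm_le (a q : ℂ) (hq : ‖q‖ < 1) (j : ℕ) :
    ‖qPoch a q j‖ ≤ Real.exp (‖a‖ * (1 - ‖q‖)⁻¹) := by
  have h0 : (0:ℝ) ≤ ‖q‖ := norm_nonneg q
  calc ‖qPoch a q j‖ ≤ ∏ i ∈ Finset.range j, ‖(1:ℂ) - a * q ^ i‖ := by
        rw [qPoch, norm_prod]
    _ ≤ ∏ i ∈ Finset.range j, (1 + ‖a‖ * ‖q‖ ^ i) := by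
        apply Finset.prod_le_prod (fun i _ => norm_nonneg _) (fun i _ => ?_)
        calc ‖(1:ℂ) - a * q ^ i‖ ≤ ‖(1:ℂ)‖ + ‖a * q ^ i‖ := norm_sub_le _ _
          _ = 1 + ‖a‖ * ‖q‖ ^ i := by rw [norm_one, norm_mul, norm_pow]
    _ ≤ ∏ i ∈ Finset.range j, Real.exp (‖a‖ * ‖q‖ ^ i) := by
        apply Finset.prod_le_prod (fun i _ => by positivity) (fun i _ => ?_)
        have := Real.add_one_le_exp (‖a‖ * ‖q‖ ^ i)
        linarith
    _ = Real.exp (∑ i ∈ Finset.range j, ‖a‖ * ‖q‖ ^ i) := (Real.exp_sum _ _).symm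
    _ ≤ Real.exp (‖a‖ * (1 - ‖q‖)⁻¹) := by
        apply Real.exp_le_exp.mpr
        rw [← Finset.mul_sum]
        exact mul_le_mul_of_nonneg_left (geom_sum_le_inv h0 hq j) (norm_nonneg a)

lemma qPoch_half_le (d q : ℂ) (hq : ‖q‖ < 1) (hd : ‖d‖ ≤ (1 - ‖q‖) / 2) (m : ℕ) :
    (1:ℝ) / 2 ≤ ‖qPoch d q m‖ := by
  have h0 : (0:ℝ) ≤ ‖q‖ := norm_nonneg q
  have hsum : ∑ i ∈ Finset.range m, ‖d‖ * ‖q‖ ^ i ≤ 1 / 2 := by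
    rw [← Finset.mul_sum]
    calc ‖d‖ * ∑ i ∈ Finset.range m, ‖q‖ ^ i ≤ (1 - ‖q‖) / 2 * (1 - ‖q‖)⁻¹ := by
          apply mul_le_mul hd (geom_sum_le_inv h0 hq m)
            (Finset.sum_nonneg fun i _ => pow_nonneg h0 i) (by linarith)
      _ = 1 / 2 := by
          have hne : (1:ℝ) - ‖q‖ ≠ 0 := by linarith
          rw [div_mul_eq_mul_div, mul_inv_cancel₀ hne]
  have ht1 : ∀ i, ‖d‖ * ‖q‖ ^ i ≤ 1 := fun i => by
    have : ‖q‖ ^ i ≤ 1 := pow_le_one₀ h0 hq.le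
    nlinarith [norm_nonneg d]
  calc (1:ℝ)/2 ≤ 1 - ∑ i ∈ Finset.range m, ‖d‖ * ‖q‖ ^ i := by linarith
    _ ≤ ∏ i ∈ Finset.range m, (1 - ‖d‖ * ‖q‖ ^ i) :=
        one_sub_sum_le_prod _ (fun i => by positivity) ht1 m
    _ ≤ ∏ i ∈ Finset.range m, ‖(1:ℂ) - d * q ^ i‖ := by
        apply Finset.prod_le_prod (fun i _ => ?_) (fun i _ => ?_)
        · have := hsum; have h2 : ‖d‖ * ‖q‖ ^ i ≤ 1/2 := by
            calc ‖d‖ * ‖q‖ ^ i ≤ (1-‖q‖)/2 * 1 := by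
                  apply mul_le_mul hd (pow_le_one₀ h0 hq.le) (by positivity) (by linarith)
              _ ≤ 1/2 := by linarith
          linarith
        · calc 1 - ‖d‖ * ‖q‖ ^ i = 1 - ‖d * q ^ i‖ := by rw [norm_mul, norm_pow]
            _ ≤ ‖(1:ℂ) - d * q ^ i‖ := by
                have := norm_sub_norm_le (1 : ℂ) (d * q ^ i); simpa using this
    _ ≤ ‖qPoch d q m‖ := by
        rw [qPoch, norm_prod]

lemma qPoch_ne_zero_s10 (c q : ℂ) (hc : ∀ n : ℕ, 1 - c * q ^ n ≠ 0) (j : ℕ) :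
    qPoch c q j ≠ 0 :=
  Finset.prod_ne_zero_iff.mpr fun i _ => hc i

lemma qPoch_lower (c q : ℂ) (hq : ‖q‖ < 1) (hc : ∀ n : ℕ, 1 - c * q ^ n ≠ 0) :
    ∃ δ : ℝ, 0 < δ ∧ ∀ j, δ ≤ ‖qPoch c q j‖ := by
  have h0 : (0:ℝ) ≤ ‖q‖ := norm_nonneg q
  have hpos : (0:ℝ) < (1 - ‖q‖) / 2 := by linarith
  have htend : Filter.Tendsto (fun n : ℕ => ‖c‖ * ‖q‖ ^ n) Filter.atTop (nhds 0) := by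
    have := tendsto_pow_atTop_nhds_zero_of_lt_one h0 hq
    simpa using this.const_mul ‖c‖
  obtain ⟨N, hN⟩ := (htend.eventually (gt_mem_nhds hpos)).exists
  have hmne : (Finset.range (N + 1)).Nonempty := Finset.nonempty_range_iff.mpr (Nat.succ_ne_zero N)
  set m := (Finset.range (N + 1)).inf' hmne (fun j => ‖qPoch c q j‖) with hm
  have hmpos : 0 < m := by
    rw [hm, Finset.lt_inf'_iff]
    exact fun j _ => norm_pos_iff.mpr (qPoch_ne_zero_s10 c q hc j)
  refine ⟨m / 2, by linarith, fun j => ?_⟩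
  rcases le_or_gt j N with hj | hj
  · have : m ≤ ‖qPoch c q j‖ :=
      Finset.inf'_le _ (Finset.mem_range.mpr (Nat.lt_succ_of_le hj))
    linarith
  · obtain ⟨k, rfl⟩ : ∃ k, j = N + k := ⟨j - N, by omega⟩
    rw [qPoch_add, norm_mul]
    have h1 : m ≤ ‖qPoch c q N‖ :=
      Finset.inf'_le _ (Finset.mem_range.mpr (Nat.lt_succ_of_le le_rfl))
    have h2 : (1:ℝ) / 2 ≤ ‖qPoch (c * q ^ N) q k‖ := by
      apply qPoch_half_le _ _ hq
      rw [norm_mul, norm_pow]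
      linarith
    calc m / 2 = m * (1/2) := by ring
      _ ≤ ‖qPoch c q N‖ * ‖qPoch (c * q ^ N) q k‖ :=
          mul_le_mul h1 h2 (by norm_num) (norm_nonneg _)

lemma summable_phi21_terms (a b c q x : ℂ) (hq : ‖q‖ < 1) (hx : ‖x‖ < 1)
    (hc : ∀ n : ℕ, 1 - c * q ^ n ≠ 0) :
    Summable (fun j : ℕ => qPoch a q j * qPoch b q j / (qPoch q q j * qPoch c q j) * x ^ j) := by
  have h0 : (0:ℝ) ≤ ‖q‖ := norm_nonneg q
  have hqn : ∀ n : ℕ, 1 - q * q ^ n ≠ 0 := fun n => by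
    apply one_sub_ne_of_norm_lt
    rw [norm_mul, norm_pow]
    calc ‖q‖ * ‖q‖ ^ n ≤ ‖q‖ * 1 :=
          mul_le_mul_of_nonneg_left (pow_le_one₀ h0 hq.le) h0
      _ < 1 := by linarith
  obtain ⟨δ₁, hδ₁, hlow₁⟩ := qPoch_lower q q hq hqn
  obtain ⟨δ₂, hδ₂, hlow₂⟩ := qPoch_lower c q hq hc
  set Ka := Real.exp (‖a‖ * (1 - ‖q‖)⁻¹)
  set Kb := Real.exp (‖b‖ * (1 - ‖q‖)⁻¹)
  apply Summable.of_norm_bounded (g := fun j => Ka * Kb / (δ₁ * δ₂) * ‖x‖ ^ j)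
    ((summable_geometric_of_lt_one (norm_nonneg x) hx).mul_left _)
  intro j
  rw [norm_mul, norm_div, norm_mul, norm_mul, norm_pow]
  apply mul_le_mul_of_nonneg_right _ (pow_nonneg (norm_nonneg x) j)
  apply div_le_div₀ (by positivity)
    (mul_le_mul (qPoch_norm_le a q hq j) (qPoch_norm_le b q hq j) (norm_nonneg _)
      (Real.exp_nonneg _))
    (by positivity)
    (mul_le_mul (hlow₁ j) (hlow₂ j) hδ₂.le (norm_nonneg _))

lemma one_sub_q_pow_ne {q : ℂ} (hq : ‖q‖ < 1) : ∀ n : ℕ, 1 - q * q ^ n ≠ 0 := fun n => by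
  apply one_sub_ne_of_norm_lt
  rw [norm_mul, norm_pow]
  calc ‖q‖ * ‖q‖ ^ n ≤ ‖q‖ * 1 :=
        mul_le_mul_of_nonneg_left (pow_le_one₀ (norm_nonneg q) hq.le) (norm_nonneg q)
    _ < 1 := by linarith


lemma scalar_id (a b c x Q : ℂ) (hQ : (1:ℂ) - Q ≠ 0) (hcQ : (1:ℂ) - c * Q ≠ 0)
    (hc1 : (1:ℂ) - c ≠ 0) (hcb : c - b ≠ 0) :
    (1 - b) * (1 - a * Q) * x / ((1 - Q) * (1 - c * Q))
      = (1 - b) * c / (c - b) * ((1 - a * Q) * (1 - b * Q) * x / ((1 - Q) * (1 - c * Q)))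
        - (1 - b) * (a * b * x) / (c - b)
        - b * (1 - c) / (c - b) * ((1 - a) * (1 - b) * x / ((1 - Q) * (1 - c))) := by
  have hp : ((1:ℂ) - Q) * (1 - c * Q) ≠ 0 := mul_ne_zero hQ hcQ
  have h2 : ((1:ℂ) - Q) * (1 - c) ≠ 0 := mul_ne_zero hQ hc1
  rw [div_mul_div_comm, div_mul_div_comm,
    div_sub_div _ _ (mul_ne_zero hcb hp) hcb,
    div_sub_div _ _ (mul_ne_zero (mul_ne_zero hcb hp) hcb) (mul_ne_zero hcb h2),
    div_eq_div_iff hp (mul_ne_zero (mul_ne_zero (mul_ne_zero hcb hp) hcb) (mul_ne_zero hcb h2))]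
  ring

set_option maxHeartbeats 2000000 in
theorem phi21_contiguous_relation (q a b c x : ℂ) (hq : ‖q‖ < 1) (hx : ‖x‖ < 1)
    (hc : ∀ n : ℕ, c * q ^ n ≠ 1) (hbc : b ≠ c) :
    phi21 (a * q) b (c * q) q x
      = (1 - b) * (c - a * b * x) / (c - b) * phi21 (a * q) (b * q) (c * q) q x
        - b * (1 - c) / (c - b) * phi21 a b c q x := by
  have hcb : c - b ≠ 0 := sub_ne_zero.mpr (Ne.symm hbc)
  have hcbase : ∀ n : ℕ, 1 - c * q ^ n ≠ 0 := fun n => sub_ne_zero.mpr (Ne.symm (hc n))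
  have hcq : ∀ n : ℕ, 1 - c * q * q ^ n ≠ 0 := fun n => by
    have h1 : c * q * q ^ n = c * q ^ (n + 1) := by rw [pow_succ]; ring
    rw [h1]; exact hcbase (n + 1)
  have hqn : ∀ n : ℕ, 1 - q * q ^ n ≠ 0 := one_sub_q_pow_ne hq
  have hc1 : (1 : ℂ) - c ≠ 0 := by simpa using hcbase 0
  set g : ℕ → ℂ := fun j =>
    qPoch (a * q) q j * qPoch (b * q) q j / (qPoch q q j * qPoch (c * q) q j) * x ^ j with hgdef
  set h : ℕ → ℂ := fun j =>
    qPoch a q j * qPoch b q j / (qPoch q q j * qPoch c q j) * x ^ j with hhdef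
  set g' : ℕ → ℂ := fun j => Nat.casesOn j 0 g with hg'def
  have hg : Summable g := summable_phi21_terms (a * q) (b * q) (c * q) q x hq hx hcq
  have hh : Summable h := summable_phi21_terms a b c q x hq hx hcbase
  have hg' : Summable g' := (summable_nat_add_iff 1).mp hg
  have hQP : ∀ j, qPoch q q j ≠ 0 := qPoch_ne_zero_s10 q q hqn
  have hCP : ∀ j, qPoch (c * q) q j ≠ 0 := qPoch_ne_zero_s10 (c * q) q hcq
  have key : ∀ j : ℕ,
      qPoch (a * q) q j * qPoch b q j / (qPoch q q j * qPoch (c * q) q j) * x ^ j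
        = (1 - b) * c / (c - b) * g j - (1 - b) * (a * b * x) / (c - b) * g' j
          - b * (1 - c) / (c - b) * h j := by
    intro j
    cases j with
    | zero =>
      simp only [hgdef, hhdef, hg'def, qPoch, Finset.range_zero, Finset.prod_empty, pow_zero, Nat.rec_zero]
      field_simp
      ring
    | succ j =>
      have e1 : g' (j + 1) = g j := rfl
      have n1 : qPoch q q j ≠ 0 := hQP j
      have n2 : qPoch (c * q) q j ≠ 0 := hCP j
      have n3 : (1 : ℂ) - q * q ^ j ≠ 0 := hqn j
      have n4 : (1 : ℂ) - c * (q * q ^ j) ≠ 0 := by rw [← mul_assoc]; exact hcq j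
      have hd1 : qPoch q q j * (1 - q * q ^ j) * (qPoch (c * q) q j * (1 - c * q * q ^ j)) ≠ 0 := by
        apply mul_ne_zero (mul_ne_zero n1 n3) (mul_ne_zero n2 (by rwa [mul_assoc]))
      have hd2 : qPoch q q j * qPoch (c * q) q j * ((1 - q * q ^ j) * (1 - c * (q * q ^ j))) ≠ 0 :=
        mul_ne_zero (mul_ne_zero n1 n2) (mul_ne_zero n3 n4)
      have hd3 : qPoch q q j * (1 - q * q ^ j) * ((1 - c) * qPoch (c * q) q j) ≠ 0 :=
        mul_ne_zero (mul_ne_zero n1 n3) (mul_ne_zero hc1 n2)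
      have hd4 : qPoch q q j * qPoch (c * q) q j * ((1 - q * q ^ j) * (1 - c)) ≠ 0 :=
        mul_ne_zero (mul_ne_zero n1 n2) (mul_ne_zero n3 hc1)
      have hf : qPoch (a * q) q (j + 1) * qPoch b q (j + 1)
            / (qPoch q q (j + 1) * qPoch (c * q) q (j + 1)) * x ^ (j + 1)
          = g j * ((1 - b) * (1 - a * (q * q ^ j)) * x
              / ((1 - q * q ^ j) * (1 - c * (q * q ^ j)))) := by
        show _ = qPoch (a * q) q j * qPoch (b * q) q j / (qPoch q q j * qPoch (c * q) q j)
            * x ^ j * _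
        rw [qPoch_succ (a * q) q j, qPoch_succ' b q j, qPoch_succ q q j,
          qPoch_succ (c * q) q j, pow_succ x j, div_mul_eq_mul_div, div_mul_eq_mul_div,
          div_mul_div_comm, div_eq_div_iff hd1 hd2]
        ring
      have hg2 : g (j + 1)
          = g j * ((1 - a * (q * q ^ j)) * (1 - b * (q * q ^ j)) * x
              / ((1 - q * q ^ j) * (1 - c * (q * q ^ j)))) := by
        show qPoch (a * q) q (j + 1) * qPoch (b * q) q (j + 1)
            / (qPoch q q (j + 1) * qPoch (c * q) q (j + 1)) * x ^ (j + 1)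
          = qPoch (a * q) q j * qPoch (b * q) q j / (qPoch q q j * qPoch (c * q) q j)
            * x ^ j * _
        rw [qPoch_succ (a * q) q j, qPoch_succ (b * q) q j, qPoch_succ q q j,
          qPoch_succ (c * q) q j, pow_succ x j, div_mul_eq_mul_div, div_mul_eq_mul_div,
          div_mul_div_comm, div_eq_div_iff hd1 hd2]
        ring
      have hh2 : h (j + 1)
          = g j * ((1 - a) * (1 - b) * x / ((1 - q * q ^ j) * (1 - c))) := by
        show qPoch a q (j + 1) * qPoch b q (j + 1)
            / (qPoch q q (j + 1) * qPoch c q (j + 1)) * x ^ (j + 1)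
          = qPoch (a * q) q j * qPoch (b * q) q j / (qPoch q q j * qPoch (c * q) q j)
            * x ^ j * _
        rw [qPoch_succ' a q j, qPoch_succ' b q j, qPoch_succ q q j,
          qPoch_succ' c q j, pow_succ x j, div_mul_eq_mul_div, div_mul_eq_mul_div,
          div_mul_div_comm, div_eq_div_iff hd3 hd4]
        ring
      rw [hf, e1, hg2, hh2, scalar_id a b c x (q * q ^ j) n3 n4 hc1 hcb]
      ring
  calc phi21 (a * q) b (c * q) q x
      = ∑' j : ℕ, ((1 - b) * c / (c - b) * g j - (1 - b) * (a * b * x) / (c - b) * g' j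
          - b * (1 - c) / (c - b) * h j) := by
        rw [phi21]; exact tsum_congr key
    _ = (1 - b) * c / (c - b) * (∑' j, g j) - (1 - b) * (a * b * x) / (c - b) * (∑' j, g' j)
          - b * (1 - c) / (c - b) * (∑' j, h j) := by
        rw [Summable.tsum_sub (Summable.sub (hg.mul_left _) (hg'.mul_left _)) (hh.mul_left _),
          Summable.tsum_sub (hg.mul_left _) (hg'.mul_left _), tsum_mul_left, tsum_mul_left,
          tsum_mul_left]
    _ = (1 - b) * (c - a * b * x) / (c - b) * phi21 (a * q) (b * q) (c * q) q x
          - b * (1 - c) / (c - b) * phi21 a b c q x := by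
        have hshift : (∑' j, g' j) = ∑' j, g j := by
          rw [Summable.tsum_eq_zero_add hg']
          simp [hg'def]
        rw [hshift, phi21, phi21]
        ring
end
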